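/- Let B be an algebra over a field k of characteristic zero, D a locally nilpotent derivation of B with kernel A, k̄ an extension field of k, B̄ = k̄ ⊗_k B, Ā = k̄ ⊗_k A, and D̄ the induced locally nilpotent derivation of B̄. Then the plinth ideal satisfies pl(D̄) = pl(D)·Ā, where pl(D) = D(B) ∩ A and pl(D̄) = D̄(B̄) ∩ Ā. -/

import Mathlib

open TensorProduct

/-- Base change of the plinth ideal: for a `k`-linear locally nilpotent derivation `D`
of a `k`-algebra `B` (`k` of characteristic zero) with kernel `A`, extension field
`k̄/k`, `B̄ = k̄ ⊗[k] B`, `Ā = k̄ ⊗[k] A` and induced derivation `D̄`, one has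
`pl(D̄) = pl(D)·Ā`, where `pl(D) = D(B) ∩ A` and `pl(D̄) = D̄(B̄) ∩ Ā`.
Here `pl(D)·Ā` is the set of finite sums of products `a * (1 ⊗ p)` with `a ∈ Ā`,
`p ∈ pl(D)`. -/
theorem stmt17 {k k' B : Type*} [Field k] [CharZero k] [Field k'] [Algebra k k']
    [CommRing B] [Algebra k B]
    (D : B →ₗ[k] B)
    (hleib : ∀ a b : B, D (a * b) = a * D b + D a * b)
    (hlnd : ∀ x : B, ∃ n : ℕ, (⇑D)^[n] x = 0) :
    Set.range ⇑(LinearMap.baseChange k' D) ∩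
        {x : k' ⊗[k] B | LinearMap.baseChange k' D x = 0} =
      ↑(AddSubgroup.closure
        {y : k' ⊗[k] B | ∃ a ∈ (Submodule.baseChange k' (LinearMap.ker D) : Set (k' ⊗[k] B)),
          ∃ p ∈ Set.range ⇑D ∩ {x : B | D x = 0}, y = a * ((1 : k') ⊗ₜ[k] p)}) := by
  classical
  set Db := LinearMap.baseChange k' D with hDb
  have h1 : D 1 = 0 := by
    have h := hleib 1 1
    rw [mul_one, one_mul, mul_one] at h
    exact add_left_cancel (h.symm.trans (add_zero (D 1)).symm)
  -- Leibniz for the base-changed derivation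
  have hleib' : ∀ u v : k' ⊗[k] B, Db (u * v) = u * Db v + Db u * v := by
    intro u v
    induction u using TensorProduct.induction_on with
    | zero => simp
    | tmul c m =>
      induction v using TensorProduct.induction_on with
      | zero => simp
      | tmul d n =>
        simp only [Algebra.TensorProduct.tmul_mul_tmul, hDb, LinearMap.baseChange_tmul,
          hleib m n, tmul_add, mul_add, add_mul]
      | add v₁ v₂ h₁ h₂ =>
        simp only [mul_add, map_add, h₁, h₂]; ring
    | add u₁ u₂ h₁ h₂ =>
      simp only [add_mul, map_add, h₁, h₂]; ring
  have hker : ∀ a ∈ Submodule.baseChange k' (LinearMap.ker D), Db a = 0 := by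
    intro a ha
    rw [Submodule.baseChange_eq_span] at ha
    induction ha using Submodule.span_induction with
    | mem x hx =>
      obtain ⟨m, hm, rfl⟩ := hx
      simp [hDb, LinearMap.mem_ker.mp hm]
    | zero => simp
    | add x y _ _ hx hy => simp [hx, hy]
    | smul c x _ hx => simp [hx]
  -- the basis machinery
  set bas := Module.Basis.ofVectorSpace k k' with hbas
  set ι := Module.Basis.ofVectorSpaceIndex k k'
  set φ : k' ⊗[k] B ≃ₗ[k] (ι →₀ B) :=
    (LinearEquiv.rTensor B bas.repr).trans (TensorProduct.finsuppScalarLeft k B ι) with hφ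
  have hφtmul : ∀ (c : k') (m : B) (i : ι), φ (c ⊗ₜ[k] m) i = bas.repr c i • m := by
    intro c m i
    simp [hφ, LinearEquiv.rTensor]
  have hcomm : ∀ (t : k' ⊗[k] B) (i : ι), φ (Db t) i = D (φ t i) := by
    intro t i
    induction t using TensorProduct.induction_on with
    | zero => simp
    | tmul c m => simp [hDb, hφtmul, map_smul]
    | add x y hx hy => simp [map_add, hx, hy]
  have hsymm : ∀ (i : ι) (v : B), φ.symm (Finsupp.single i v) = (bas i : k') ⊗ₜ[k] v := by
    intro i v
    rw [hφ]
    simp only [LinearEquiv.trans_symm, LinearEquiv.trans_apply,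
      TensorProduct.finsuppScalarLeft_symm_apply_single]
    rw [LinearEquiv.rTensor]
    simp [Module.Basis.repr_symm_single_one]
  ext x
  constructor
  · rintro ⟨⟨y, rfl⟩, hx0⟩
    simp only [Set.mem_setOf_eq] at hx0
    -- x = Db y, Db x = 0
    have hx : (Db y) = φ.symm (φ (Db y)) := (φ.symm_apply_apply _).symm
    rw [hx, ← Finsupp.sum_single (φ (Db y)), Finsupp.sum, map_sum]
    apply AddSubgroup.sum_mem
    intro i _
    rw [hsymm]
    apply AddSubgroup.subset_closure
    refine ⟨(bas i : k') ⊗ₜ[k] 1, ?_, φ (Db y) i, ⟨⟨φ y i, (hcomm y i).symm⟩, ?_⟩, ?_⟩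
    · exact Submodule.tmul_mem_baseChange_of_mem _ (by simp [LinearMap.mem_ker, h1])
    · show D (φ (Db y) i) = 0
      rw [← hcomm, hx0, map_zero]; rfl
    · rw [Algebra.TensorProduct.tmul_mul_tmul, one_mul, mul_one]
  · intro hx
    have : AddSubgroup.closure
        {y : k' ⊗[k] B | ∃ a ∈ (Submodule.baseChange k' (LinearMap.ker D) : Set (k' ⊗[k] B)),
          ∃ p ∈ Set.range ⇑D ∩ {x : B | D x = 0}, y = a * ((1 : k') ⊗ₜ[k] p)} ≤
        ((LinearMap.range Db).toAddSubgroup ⊓ (LinearMap.ker Db).toAddSubgroup) := by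
      rw [AddSubgroup.closure_le]
      rintro y ⟨a, ha, p, ⟨⟨b, rfl⟩, hp0⟩, rfl⟩
      simp only [Set.mem_setOf_eq] at hp0
      constructor
      · exact ⟨a * ((1:k') ⊗ₜ[k] b), by
          rw [hleib', hker a ha, zero_mul, add_zero]
          simp [hDb]⟩
      · show Db _ = 0
        rw [hleib', hker a ha, zero_mul, add_zero]
        simp [hDb, hp0]
    obtain ⟨h1', h2'⟩ := this hx
    exact ⟨h1', h2'⟩
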